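/- Let (V, ⟨·,·⟩) be a finite-dimensional real inner product space of dimension n and let T : V → V be symmetric with eigenvalues λ₁ ≤ ⋯ ≤ λₙ. For 1 ≤ k ≤ n, λ₁ + ⋯ + λ_k equals the infimum, over all k-dimensional subspaces W ⊆ V, of the trace of T restricted to W (i.e., Σᵢ ⟨T eᵢ, eᵢ⟩ over an orthonormal basis {eᵢ} of W). In particular, T ↦ λ₁(T) + ⋯ + λ_k(T) is a concave function on symmetric operators. -/
import Mathlib

open scoped RealInnerProductSpace

/-- The infimum, over orthonormal `k`-families in `ℝⁿ`, of the trace of the symmetric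
operator `T` restricted to the span of the family; this equals the sum of the `k`
smallest eigenvalues of `T`. -/
noncomputable def mSum (n k : ℕ)
    (T : EuclideanSpace ℝ (Fin n) →ₗ[ℝ] EuclideanSpace ℝ (Fin n)) : ℝ :=
  sInf {t : ℝ | ∃ e : Fin k → EuclideanSpace ℝ (Fin n), Orthonormal ℝ e ∧
    t = ∑ i, ⟪T (e i), e i⟫}

theorem stmt14 (n k : ℕ) (hk : 1 ≤ k) (hkn : k ≤ n)
    (T : EuclideanSpace ℝ (Fin n) →ₗ[ℝ] EuclideanSpace ℝ (Fin n))
    (hT : T.IsSymmetric)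
    (b : OrthonormalBasis (Fin n) ℝ (EuclideanSpace ℝ (Fin n)))
    (lam : Fin n → ℝ) (hmono : Monotone lam)
    (heig : ∀ i, T (b i) = lam i • b i) :
    (∑ i : Fin n, if (i : ℕ) < k then lam i else 0) = mSum n k T ∧
    ∀ (S S' : EuclideanSpace ℝ (Fin n) →ₗ[ℝ] EuclideanSpace ℝ (Fin n)),
      S.IsSymmetric → S'.IsSymmetric → ∀ s : ℝ, s ∈ Set.Icc (0 : ℝ) 1 →
        s * mSum n k S + (1 - s) * mSum n k S' ≤ mSum n k (s • S + (1 - s) • S') := by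
  classical
  set V := EuclideanSpace ℝ (Fin n)
  set A : (V →ₗ[ℝ] V) → Set ℝ := fun S =>
    {t : ℝ | ∃ e : Fin k → V, Orthonormal ℝ e ∧ t = ∑ i, ⟪S (e i), e i⟫} with hA
  have hmS : ∀ S, mSum n k S = sInf (A S) := fun _ => rfl
  -- a distinguished orthonormal k-family
  have he0 : Orthonormal ℝ (fun i : Fin k => b (Fin.castLE hkn i)) :=
    b.orthonormal.comp _ (Fin.castLE_injective hkn)
  have hne : ∀ S : V →ₗ[ℝ] V, (A S).Nonempty := fun S =>
    ⟨∑ i : Fin k, ⟪S (b (Fin.castLE hkn i)), b (Fin.castLE hkn i)⟫, _, he0, rfl⟩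
  -- boundedness below for any operator
  have hbdd : ∀ S : V →ₗ[ℝ] V, BddBelow (A S) := by
    intro S
    refine ⟨-(k * ‖LinearMap.toContinuousLinearMap S‖), ?_⟩
    rintro t ⟨e, he, rfl⟩
    have hterm : ∀ i : Fin k, -‖LinearMap.toContinuousLinearMap S‖ ≤ ⟪S (e i), e i⟫ := by
      intro i
      have h1 : ‖e i‖ = 1 := he.1 i
      have h2 : |⟪S (e i), e i⟫| ≤ ‖S (e i)‖ * ‖e i‖ := abs_real_inner_le_norm _ _
      have h3 : ‖S (e i)‖ ≤ ‖LinearMap.toContinuousLinearMap S‖ * ‖e i‖ :=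
        (LinearMap.toContinuousLinearMap S).le_opNorm (e i)
      have h4 := neg_abs_le ⟪S (e i), e i⟫
      rw [h1, mul_one] at h2 h3
      linarith [abs_nonneg ⟪S (e i), e i⟫]
    calc -((k : ℝ) * ‖LinearMap.toContinuousLinearMap S‖)
        = ∑ _i : Fin k, -‖LinearMap.toContinuousLinearMap S‖ := by
          rw [Finset.sum_const, Finset.card_univ, Fintype.card_fin, nsmul_eq_mul]; ring
      _ ≤ ∑ i, ⟪S (e i), e i⟫ := Finset.sum_le_sum fun i _ => hterm i
  -- Part 1 lower bound: any orthonormal family has trace at least the eigenvalue sum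
  have hlow : ∀ e : Fin k → V, Orthonormal ℝ e →
      (∑ i : Fin n, if (i : ℕ) < k then lam i else 0) ≤ ∑ i, ⟪T (e i), e i⟫ := by
    intro e he
    set c : Fin n → ℝ := fun j => ∑ i : Fin k, ⟪e i, b j⟫ ^ 2 with hc
    set χ : Fin n → ℝ := fun j => if (j : ℕ) < k then (1 : ℝ) else 0 with hχ
    have hquad : ∀ x : V, ⟪T x, x⟫ = ∑ j : Fin n, lam j * ⟪x, b j⟫ ^ 2 := by
      intro x
      rw [← b.sum_inner_mul_inner (T x) x]
      refine Finset.sum_congr rfl fun j _ => ?_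
      have : ⟪T x, b j⟫ = lam j * ⟪x, b j⟫ := by
        rw [hT x (b j), heig j, real_inner_smul_right]
      rw [this, real_inner_comm (b j) x]
      ring
    have htrace : ∑ i, ⟪T (e i), e i⟫ = ∑ j : Fin n, lam j * c j := by
      simp_rw [hquad, hc, Finset.mul_sum]
      rw [Finset.sum_comm]
    have hc_nonneg : ∀ j, 0 ≤ c j := fun j =>
      Finset.sum_nonneg fun i _ => sq_nonneg _
    have hc_le : ∀ j, c j ≤ 1 := by
      intro j
      have hb := he.sum_inner_products_le (x := b j) (s := Finset.univ)
      have hbn : ‖b j‖ = 1 := b.orthonormal.1 j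
      simpa [hbn, Real.norm_eq_abs, sq_abs] using hb
    have hcsum : ∑ j, c j = (k : ℝ) := by
      rw [Finset.sum_comm]
      have : ∀ i : Fin k, ∑ j : Fin n, ⟪e i, b j⟫ ^ 2 = 1 := by
        intro i
        have := b.sum_inner_mul_inner (e i) (e i)
        have hn : ⟪e i, e i⟫ = 1 := by
          have h1 : ‖e i‖ = 1 := he.1 i
          rw [real_inner_self_eq_norm_sq, h1]; norm_num
        calc ∑ j : Fin n, ⟪e i, b j⟫ ^ 2
            = ∑ j : Fin n, ⟪e i, b j⟫ * ⟪b j, e i⟫ := by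
              refine Finset.sum_congr rfl fun j _ => ?_
              rw [real_inner_comm (b j) (e i)]; ring
          _ = 1 := by rw [this, hn]
      simp [this]
    have hχsum : ∑ j, χ j = (k : ℝ) := by
      have hcard : (Finset.univ.filter fun j : Fin n => (j : ℕ) < k).card = k := by
        have : (Finset.univ.filter fun j : Fin n => (j : ℕ) < k) =
            Finset.map ⟨Fin.castLE hkn, Fin.castLE_injective hkn⟩ Finset.univ := by
          ext j
          simp only [Finset.mem_filter, Finset.mem_univ, true_and, Finset.mem_map,
            Function.Embedding.coeFn_mk]
          constructor
          · intro h; exact ⟨⟨(j : ℕ), h⟩, by ext; simp⟩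
          · rintro ⟨i, rfl⟩; exact i.2
        rw [this, Finset.card_map, Finset.card_univ, Fintype.card_fin]
      simp [hχ, Finset.sum_ite, hcard]
    set μ : ℝ := lam ⟨k - 1, lt_of_lt_of_le (Nat.sub_lt hk one_pos) hkn⟩ with hμ
    have hdiff : ∑ j, lam j * c j - (∑ j : Fin n, if (j : ℕ) < k then lam j else 0) =
        (∑ j, (lam j - μ) * (c j - χ j)) + μ * (∑ j, (c j - χ j)) := by
      rw [Finset.mul_sum, ← Finset.sum_add_distrib, ← Finset.sum_sub_distrib]
      refine Finset.sum_congr rfl fun j _ => ?_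
      by_cases h : (j : ℕ) < k <;> simp [hχ, h] <;> ring
    have hzero : ∑ j, (c j - χ j) = 0 := by
      rw [Finset.sum_sub_distrib, hcsum, hχsum, sub_self]
    have hpos : 0 ≤ ∑ j, (lam j - μ) * (c j - χ j) := by
      refine Finset.sum_nonneg fun j _ => ?_
      by_cases h : (j : ℕ) < k
      · have h1 : lam j - μ ≤ 0 := by
          have : (j : ℕ) ≤ k - 1 := Nat.le_sub_one_of_lt h
          have := hmono (show j ≤ (⟨k - 1, lt_of_lt_of_le (Nat.sub_lt hk one_pos) hkn⟩ : Fin n)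
            from this)
          linarith
        have h2 : c j - χ j ≤ 0 := by simp [hχ, h]; exact hc_le j
        nlinarith [mul_nonneg (neg_nonneg.mpr h1) (neg_nonneg.mpr h2)]
      · have h1 : 0 ≤ lam j - μ := by
          have : k - 1 ≤ (j : ℕ) := le_trans (Nat.sub_le k 1) (not_lt.mp h)
          have := hmono (show (⟨k - 1, lt_of_lt_of_le (Nat.sub_lt hk one_pos) hkn⟩ : Fin n) ≤ j
            from this)
          linarith
        have h2 : 0 ≤ c j - χ j := by simp [hχ, h]; exact hc_nonneg j
        exact mul_nonneg h1 h2
    rw [htrace]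
    have := hdiff
    rw [hzero, mul_zero, add_zero] at this
    linarith
  constructor
  · -- Part 1
    refine le_antisymm (le_csInf (hne T) ?_) (csInf_le (hbdd T) ?_)
    · rintro t ⟨e, he, rfl⟩; exact hlow e he
    · refine ⟨fun i : Fin k => b (Fin.castLE hkn i), he0, ?_⟩
      have : ∀ i : Fin k, ⟪T (b (Fin.castLE hkn i)), b (Fin.castLE hkn i)⟫ =
          lam (Fin.castLE hkn i) := by
        intro i
        rw [heig, real_inner_smul_left]
        have h1 : ‖b (Fin.castLE hkn i)‖ = 1 := b.orthonormal.1 _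
        rw [real_inner_self_eq_norm_sq, h1]; norm_num
      rw [← Finset.sum_filter]
      have hfil : (Finset.univ.filter fun j : Fin n => (j : ℕ) < k) =
          Finset.map ⟨Fin.castLE hkn, Fin.castLE_injective hkn⟩ Finset.univ := by
        ext j
        simp only [Finset.mem_filter, Finset.mem_univ, true_and, Finset.mem_map,
          Function.Embedding.coeFn_mk]
        constructor
        · intro h; exact ⟨⟨(j : ℕ), h⟩, by ext; simp⟩
        · rintro ⟨i, rfl⟩; exact i.2
      rw [hfil, Finset.sum_map]
      exact Finset.sum_congr rfl fun i _ => (this i).symm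
  · -- Part 2: concavity
    rintro S S' _ _ s ⟨hs0, hs1⟩
    rw [hmS, hmS, hmS]
    refine le_csInf (hne _) ?_
    rintro t ⟨e, he, rfl⟩
    have hsplit : ∑ i, ⟪(s • S + (1 - s) • S') (e i), e i⟫ =
        s * (∑ i, ⟪S (e i), e i⟫) + (1 - s) * (∑ i, ⟪S' (e i), e i⟫) := by
      simp_rw [LinearMap.add_apply, LinearMap.smul_apply, inner_add_left,
        real_inner_smul_left, Finset.sum_add_distrib, Finset.mul_sum]
    rw [hsplit]
    have h1 : sInf (A S) ≤ ∑ i, ⟪S (e i), e i⟫ := csInf_le (hbdd S) ⟨e, he, rfl⟩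
    have h2 : sInf (A S') ≤ ∑ i, ⟪S' (e i), e i⟫ := csInf_le (hbdd S') ⟨e, he, rfl⟩
    have := mul_le_mul_of_nonneg_left h1 hs0
    have := mul_le_mul_of_nonneg_left h2 (by linarith : (0:ℝ) ≤ 1 - s)
    linarith
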